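/- Let f be a waning function, g ∈ I_ℕ, and r ∈ ℕ with f(r) ≤ f(|g|) = f(|g↾r|). Define W_{f,g,r} = {h ∈ I_ℕ : h↾r = g↾r and |im(h) ∩ (r \ im(g))| ≤ f(|g|)}. Then for any p ≥ r, W_{f,g,p} is defined (i.e., f(p) ≤ f(|g|) = f(|g↾p|)) and W_{f,g,p} ⊆ W_{f,g,r}. -/
import Mathlib


open Set Classical

noncomputable section

/-- A partial injection (partial bijection) on ℕ, viewed as a set of pairs. -/
def IsPInj (g : Set (ℕ × ℕ)) : Prop :=
  ∀ ⦃a b c d : ℕ⦄, (a, b) ∈ g → (c, d) ∈ g → (a = c ↔ b = d)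

/-- Domain of a partial injection. -/
def pdom (g : Set (ℕ × ℕ)) : Set ℕ := {x | ∃ y, (x, y) ∈ g}

/-- Image of a partial injection. -/
def pim (g : Set (ℕ × ℕ)) : Set ℕ := {y | ∃ x, (x, y) ∈ g}

/-- Restriction of a partial injection to `{0, …, r-1}`. -/
def pres (g : Set (ℕ × ℕ)) (r : ℕ) : Set (ℕ × ℕ) := {p ∈ g | p.1 < r}

/-- A waning function `f : ω + 1 → ω + 1`. -/
def Waning (f : ℕ∞ → ℕ∞) : Prop :=
  Antitone f ∧
    ((∀ i, f i = ⊤) ∨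
      ((∃ i : ℕ, f i ≠ ⊤) ∧
        ∀ j : ℕ, f j ≠ 0 → f j ≠ ⊤ → f ((j + 1 : ℕ)) < f j))

/-- The set `W_{f,g,r} = {h : h↾r = g↾r and |im(h) ∩ (r \ im(g))| ≤ f(|g|)}`. -/
def Wset (f : ℕ∞ → ℕ∞) (g : Set (ℕ × ℕ)) (r : ℕ) : Set (Set (ℕ × ℕ)) :=
  {h | IsPInj h ∧ pres h r = pres g r ∧
    (pim h ∩ ({y | y < r} \ pim g)).encard ≤ f g.encard}

/-- If `W_{f,g,r}` is defined (i.e. `f(r) ≤ f(|g|) = f(|g↾r|)`), then for any `p ≥ r`,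
`W_{f,g,p}` is defined and `W_{f,g,p} ⊆ W_{f,g,r}`. -/
theorem Wset_defined_and_subset (f : ℕ∞ → ℕ∞) (hf : Waning f)
    (g : Set (ℕ × ℕ)) (hg : IsPInj g) (r : ℕ)
    (hr1 : f r ≤ f g.encard) (hr2 : f g.encard = f (pres g r).encard)
    (p : ℕ) (hp : r ≤ p) :
    (f p ≤ f g.encard ∧ f g.encard = f (pres g p).encard) ∧
      Wset f g p ⊆ Wset f g r := by
  obtain ⟨hanti, -⟩ := hf
  have hsub1 : pres g r ⊆ pres g p := fun x hx => ⟨hx.1, lt_of_lt_of_le hx.2 hp⟩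
  have hsub2 : pres g p ⊆ g := fun x hx => hx.1
  refine ⟨⟨?_, ?_⟩, ?_⟩
  · exact le_trans (hanti (by exact_mod_cast Nat.cast_le.mpr hp)) hr1
  · refine le_antisymm (hanti (encard_mono hsub2)) ?_
    calc f (pres g p).encard ≤ f (pres g r).encard := hanti (encard_mono hsub1)
      _ = f g.encard := hr2.symm
  · rintro h ⟨hinj, hpres, hcard⟩
    refine ⟨hinj, ?_, ?_⟩
    · ext x
      constructor
      · rintro ⟨hxh, hxr⟩
        have : x ∈ pres g p := hpres ▸ ⟨hxh, lt_of_lt_of_le hxr hp⟩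
        exact ⟨this.1, hxr⟩
      · rintro ⟨hxg, hxr⟩
        have : x ∈ pres h p := hpres ▸ ⟨hxg, lt_of_lt_of_le hxr hp⟩
        exact ⟨this.1, hxr⟩
    · refine le_trans (encard_mono ?_) hcard
      rintro y ⟨hy, hyr, hyg⟩
      exact ⟨hy, lt_of_lt_of_le hyr hp, hyg⟩
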